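/- arXiv:1903.05298 — 6 statements merged into one kernel-verified Lean document; each statement's English description precedes it below -/
import Mathlib

section
/- Let r ∈ ℝ with -2 < r < 2. Then every A ∈ SL(2,ℝ) with tr A = r is conjugate in SL(2,ℝ) to a rotation matrix R_θ = [[cos θ, -sin θ],[sin θ, cos θ]] for some θ ∈ ℝ with 2 cos θ = r. -/
/-- For `r ∈ ℝ` with `-2 < r < 2`, every `A ∈ SL(2,ℝ)` with `tr A = r`
is conjugate in `SL(2,ℝ)` to a rotation matrix `R_θ = [[cos θ, -sin θ],[sin θ, cos θ]]`
with `2 cos θ = r`. -/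
theorem trace_fiber_elliptic_SL2R
    (r : ℝ) (h1 : -2 < r) (h2 : r < 2)
    (A : Matrix.SpecialLinearGroup (Fin 2) ℝ)
    (hA : Matrix.trace (A : Matrix (Fin 2) (Fin 2) ℝ) = r) :
    ∃ θ : ℝ, 2 * Real.cos θ = r ∧
      ∃ g : Matrix.SpecialLinearGroup (Fin 2) ℝ,
        (A : Matrix (Fin 2) (Fin 2) ℝ) =
          (g : Matrix (Fin 2) (Fin 2) ℝ) *
            !![Real.cos θ, -Real.sin θ; Real.sin θ, Real.cos θ] *
            ((g⁻¹ : Matrix.SpecialLinearGroup (Fin 2) ℝ) : Matrix (Fin 2) (Fin 2) ℝ) := by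
  obtain ⟨a, b, c, d, hAeq⟩ : ∃ a b c d : ℝ,
      (A : Matrix (Fin 2) (Fin 2) ℝ) = !![a, b; c, d] :=
    ⟨_, _, _, _, Matrix.eta_fin_two _⟩
  have hdet : a * d - b * c = 1 := by
    have := A.2
    rw [hAeq, Matrix.det_fin_two_of] at this
    linarith
  have htr : a + d = r := by
    rw [hAeq, Matrix.trace_fin_two_of] at hA
    exact hA
  have hc : c ≠ 0 := by
    intro h
    rw [h] at hdet
    nlinarith [sq_nonneg (a - d)]
  have hr1 : -1 ≤ r / 2 := by linarith
  have hr2 : r / 2 ≤ 1 := by linarith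
  have hs2 : 0 < 1 - (r / 2) ^ 2 := by nlinarith
  have hsqrtpos : 0 < Real.sqrt (1 - (r / 2) ^ 2) := Real.sqrt_pos.mpr hs2
  obtain ⟨θ, hcos, hsin⟩ : ∃ θ : ℝ, Real.cos θ = r / 2 ∧
      Real.sin θ = (if 0 ≤ c then (1 : ℝ) else -1) * Real.sqrt (1 - (r / 2) ^ 2) := by
    refine ⟨(if 0 ≤ c then (1 : ℝ) else -1) * Real.arccos (r / 2), ?_, ?_⟩ <;> split
    · rw [one_mul, Real.cos_arccos hr1 hr2]
    · rw [neg_one_mul, Real.cos_neg, Real.cos_arccos hr1 hr2]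
    · rw [one_mul, one_mul, Real.sin_arccos]
    · rw [neg_one_mul, neg_one_mul, Real.sin_neg, Real.sin_arccos]
  have hγpos : 0 < c / Real.sin θ := by
    rw [hsin]; split
    · rename_i h
      exact div_pos (lt_of_le_of_ne h (Ne.symm hc)) (by simpa using hsqrtpos)
    · rename_i h
      apply div_pos_of_neg_of_neg (lt_of_not_ge h)
      simpa using neg_neg_of_pos hsqrtpos
  have ht : Real.sin θ ≠ 0 := by
    intro h
    rw [h] at hγpos
    simp at hγpos
  have ht2 : Real.sin θ ^ 2 = 1 - (r / 2) ^ 2 := by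
    have := Real.sin_sq_add_cos_sq θ
    rw [hcos] at this
    nlinarith
  obtain ⟨q, hqpos, hq2⟩ : ∃ q : ℝ, 0 < q ∧ q * q * Real.sin θ = c :=
    ⟨Real.sqrt (c / Real.sin θ), Real.sqrt_pos.mpr hγpos, by
      rw [Real.mul_self_sqrt hγpos.le, div_mul_cancel₀ c ht]⟩
  have hqne : q ≠ 0 := ne_of_gt hqpos
  obtain ⟨α, hαt⟩ : ∃ α : ℝ, α * Real.sin θ = a - r / 2 :=
    ⟨(a - r / 2) / Real.sin θ, div_mul_cancel₀ _ ht⟩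
  have hRdet : (!![Real.cos θ, -Real.sin θ; Real.sin θ, Real.cos θ] : Matrix (Fin 2) (Fin 2) ℝ).det = 1 := by
    rw [Matrix.det_fin_two_of]
    nlinarith [Real.sin_sq_add_cos_sq θ]
  have hgdet : (!![1 / q, α / q; 0, q] : Matrix (Fin 2) (Fin 2) ℝ).det = 1 := by
    rw [Matrix.det_fin_two_of]
    field_simp
    ring
  have key : (!![a, b; c, d] : Matrix (Fin 2) (Fin 2) ℝ) * !![1 / q, α / q; 0, q]
      = !![1 / q, α / q; 0, q] * !![Real.cos θ, -Real.sin θ; Real.sin θ, Real.cos θ] := by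
    ext i j
    fin_cases i <;> fin_cases j <;>
      simp [Matrix.mul_apply, Fin.sum_univ_two] <;>
      field_simp
    · linear_combination -hcos - hαt
    · apply mul_left_cancel₀ ht
      linear_combination a*hαt + b*hq2 + ht2 - Real.cos θ*hαt
        - (a - r/2)*hcos - hdet + a*htr
    · linear_combination -hq2
    · apply mul_left_cancel₀ ht
      linear_combination c*hαt + d*hq2 - Real.cos θ*hq2 - c*hcos + c*htr
  set gsl : Matrix.SpecialLinearGroup (Fin 2) ℝ := ⟨!![1 / q, α / q; 0, q], hgdet⟩ with hgsl
  set Rsl : Matrix.SpecialLinearGroup (Fin 2) ℝ :=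
    ⟨!![Real.cos θ, -Real.sin θ; Real.sin θ, Real.cos θ], hRdet⟩ with hRsl
  have hkey : A * gsl = gsl * Rsl := by
    apply Subtype.ext
    rw [Matrix.SpecialLinearGroup.coe_mul, Matrix.SpecialLinearGroup.coe_mul, hAeq]
    exact key
  refine ⟨θ, by rw [hcos]; ring, gsl, ?_⟩
  have hgrp : A = gsl * Rsl * gsl⁻¹ := by
    rw [← hkey, mul_assoc, mul_inv_cancel, mul_one]
  have := congrArg (fun x : Matrix.SpecialLinearGroup (Fin 2) ℝ => (x : Matrix (Fin 2) (Fin 2) ℝ)) hgrp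
  simpa [Matrix.SpecialLinearGroup.coe_mul] using this
end

section
/- The fiber Tr⁻¹(2) of the trace map Tr : SL(2,ℝ) → ℝ consists of exactly three conjugacy classes: every A ∈ SL(2,ℝ) with tr A = 2 is either equal to I₂, or conjugate in SL(2,ℝ) to [[1,1],[0,1]], or conjugate in SL(2,ℝ) to [[1,-1],[0,1]], and exactly one of these three alternatives holds; in particular [[1,1],[0,1]] and [[1,-1],[0,1]] are not conjugate in SL(2,ℝ). -/
set_option maxHeartbeats 1000000

/-- The unipotent matrix `[[1,1],[0,1]]` as an element of `SL(2,ℝ)`. -/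
def unipPlusSL2R : Matrix.SpecialLinearGroup (Fin 2) ℝ :=
  ⟨!![1, 1; 0, 1], by norm_num [Matrix.det_fin_two_of]⟩

/-- The unipotent matrix `[[1,-1],[0,1]]` as an element of `SL(2,ℝ)`. -/
def unipMinusSL2R : Matrix.SpecialLinearGroup (Fin 2) ℝ :=
  ⟨!![1, -1; 0, 1], by norm_num [Matrix.det_fin_two_of]⟩

abbrev SL2 := Matrix.SpecialLinearGroup (Fin 2) ℝ

lemma conj_of_rel (A g U : SL2) (h : A * g = g * U) : A = g * U * g⁻¹ := by
  rw [eq_mul_inv_iff_mul_eq, h]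

lemma exists_conj (A : SL2) (htr : Matrix.trace (A : Matrix (Fin 2) (Fin 2) ℝ) = 2)
    (hne : A ≠ 1) :
    (∃ g, A = g * unipPlusSL2R * g⁻¹) ∨ (∃ g, A = g * unipMinusSL2R * g⁻¹) := by
  set a := (A : Matrix (Fin 2) (Fin 2) ℝ) 0 0 with ha
  set b := (A : Matrix (Fin 2) (Fin 2) ℝ) 0 1 with hb
  set c := (A : Matrix (Fin 2) (Fin 2) ℝ) 1 0 with hc
  set d := (A : Matrix (Fin 2) (Fin 2) ℝ) 1 1 with hd
  have hA : (A : Matrix (Fin 2) (Fin 2) ℝ) = !![a, b; c, d] := Matrix.eta_fin_two _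
  have hdet : a * d - b * c = 1 := by
    have := A.2; rw [Matrix.det_fin_two] at this; exact this
  have htr' : a + d = 2 := by
    rw [Matrix.trace_fin_two] at htr; exact htr
  have hbc : b * c = -(a - 1)^2 := by linear_combination a * htr' - hdet
  rcases lt_trichotomy c 0 with hcn | hc0 | hcp
  · -- c < 0 : conjugate to unipPlus
    left
    set s := Real.sqrt (-c) with hsdef
    have hs2 : s ^ 2 = -c := Real.sq_sqrt (by linarith)
    have hs0 : 0 < s := Real.sqrt_pos.mpr (by linarith)
    refine ⟨⟨!![(a-1)/s, 1/s; c/s, 0], ?_⟩, ?_⟩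
    · rw [Matrix.det_fin_two_of, mul_zero, zero_sub, div_mul_div_comm, one_mul, ← pow_two, hs2,
        div_neg, neg_neg, div_self (ne_of_lt hcn)]
    · apply conj_of_rel
      apply Subtype.coe_injective
      show (A : Matrix (Fin 2) (Fin 2) ℝ) * !![(a-1)/s, 1/s; c/s, 0] = !![(a-1)/s, 1/s; c/s, 0] * !![1, 1; 0, 1]
      rw [hA]
      simp only [Matrix.mul_fin_two]
      ext i j
      fin_cases i <;> fin_cases j <;> simp <;> field_simp <;> nlinarith
  · -- c = 0
    have ha1 : a = 1 := by
      have h0 : (a - 1) ^ 2 = 0 := by rw [hc0, mul_zero] at hbc; linarith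
      have := pow_eq_zero_iff (n := 2) (by norm_num) |>.mp h0
      linarith
    have hd1 : d = 1 := by linarith
    have hbne : b ≠ 0 := by
      intro hb0
      apply hne
      apply Subtype.coe_injective
      show (A : Matrix (Fin 2) (Fin 2) ℝ) = ((1 : SL2) : Matrix (Fin 2) (Fin 2) ℝ)
      rw [hA, ha1, hd1, hb0, hc0, Matrix.SpecialLinearGroup.coe_one, Matrix.one_fin_two]
    rcases hbne.lt_or_gt with hbn | hbp
    · -- b < 0 : conjugate to unipMinus
      right
      set s := Real.sqrt (-b) with hsdef
      have hs2 : s ^ 2 = -b := Real.sq_sqrt (by linarith)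
      have hs0 : 0 < s := Real.sqrt_pos.mpr (by linarith)
      refine ⟨⟨!![s, 0; 0, 1/s], ?_⟩, ?_⟩
      · rw [Matrix.det_fin_two_of, mul_zero, sub_zero, mul_one_div_cancel hs0.ne']
      · apply conj_of_rel
        apply Subtype.coe_injective
        show (A : Matrix (Fin 2) (Fin 2) ℝ) * !![s, 0; 0, 1/s] = !![s, 0; 0, 1/s] * !![1, -1; 0, 1]
        rw [hA]
        simp only [Matrix.mul_fin_two]
        ext i j
        fin_cases i <;> fin_cases j <;> simp [ha1, hd1, hc0] <;> field_simp <;> nlinarith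
    · -- b > 0 : conjugate to unipPlus
      left
      set s := Real.sqrt b with hsdef
      have hs2 : s ^ 2 = b := Real.sq_sqrt (by linarith)
      have hs0 : 0 < s := Real.sqrt_pos.mpr hbp
      refine ⟨⟨!![s, 0; 0, 1/s], ?_⟩, ?_⟩
      · rw [Matrix.det_fin_two_of, mul_zero, sub_zero, mul_one_div_cancel hs0.ne']
      · apply conj_of_rel
        apply Subtype.coe_injective
        show (A : Matrix (Fin 2) (Fin 2) ℝ) * !![s, 0; 0, 1/s] = !![s, 0; 0, 1/s] * !![1, 1; 0, 1]
        rw [hA]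
        simp only [Matrix.mul_fin_two]
        ext i j
        fin_cases i <;> fin_cases j <;> simp [ha1, hd1, hc0] <;> field_simp <;> nlinarith
  · -- c > 0 : conjugate to unipMinus
    right
    set s := Real.sqrt c with hsdef
    have hs2 : s ^ 2 = c := Real.sq_sqrt (by linarith)
    have hs0 : 0 < s := Real.sqrt_pos.mpr hcp
    refine ⟨⟨!![(a-1)/s, (-1)/s; c/s, 0], ?_⟩, ?_⟩
    · rw [Matrix.det_fin_two_of, mul_zero, zero_sub, div_mul_div_comm, ← pow_two, hs2,
        neg_one_mul, neg_div, neg_neg, div_self (ne_of_gt hcp)]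
    · apply conj_of_rel
      apply Subtype.coe_injective
      show (A : Matrix (Fin 2) (Fin 2) ℝ) * !![(a-1)/s, (-1)/s; c/s, 0] = !![(a-1)/s, (-1)/s; c/s, 0] * !![1, -1; 0, 1]
      rw [hA]
      simp only [Matrix.mul_fin_two]
      ext i j
      fin_cases i <;> fin_cases j <;> simp <;> field_simp <;> nlinarith

lemma unipPlus_ne_one : unipPlusSL2R ≠ (1 : SL2) := by
  intro h
  have := congrFun (congrFun (congrArg Subtype.val h) 0) 1
  simp [unipPlusSL2R, Matrix.SpecialLinearGroup.coe_one, Matrix.one_fin_two] at this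

lemma unipMinus_ne_one : unipMinusSL2R ≠ (1 : SL2) := by
  intro h
  have := congrFun (congrFun (congrArg Subtype.val h) 0) 1
  simp [unipMinusSL2R, Matrix.SpecialLinearGroup.coe_one, Matrix.one_fin_two] at this

lemma conj_eq_one (g U : SL2) (h : (1 : SL2) = g * U * g⁻¹) : U = 1 := by
  have h' := congrArg (fun x => g⁻¹ * x * g) h
  simp only [mul_one, mul_assoc] at h'
  simpa [← mul_assoc] using h'.symm

lemma not_conj : ¬ ∃ g : SL2, unipMinusSL2R = g * unipPlusSL2R * g⁻¹ := by
  rintro ⟨g, h⟩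
  rw [eq_mul_inv_iff_mul_eq] at h
  have hm : (unipMinusSL2R : Matrix (Fin 2) (Fin 2) ℝ) * g
      = (g : Matrix (Fin 2) (Fin 2) ℝ) * unipPlusSL2R := by
    have := congrArg (Subtype.val) h
    simpa using this
  set p := (g : Matrix (Fin 2) (Fin 2) ℝ) 0 0 with hp
  set q := (g : Matrix (Fin 2) (Fin 2) ℝ) 0 1 with hq
  set r := (g : Matrix (Fin 2) (Fin 2) ℝ) 1 0 with hr
  set s := (g : Matrix (Fin 2) (Fin 2) ℝ) 1 1 with hs
  have hg : (g : Matrix (Fin 2) (Fin 2) ℝ) = !![p, q; r, s] := Matrix.eta_fin_two _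
  have hdet : p * s - q * r = 1 := by
    have := g.2
    rw [Matrix.det_fin_two] at this
    exact this
  rw [hg] at hm
  simp only [unipMinusSL2R, unipPlusSL2R, Matrix.mul_fin_two] at hm
  have h00 := congrFun (congrFun hm 0) 0
  have h01 := congrFun (congrFun hm 0) 1
  simp [Matrix.of_apply] at h00 h01
  have hp' : p = -s := by linarith
  rw [hp', h00, mul_zero, sub_zero] at hdet
  nlinarith [sq_nonneg s]

/-- The fiber `Tr⁻¹(2)` in `SL(2,ℝ)` consists of exactly three
conjugacy classes: every `A` with `tr A = 2` is either `I₂`, or conjugate to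
`[[1,1],[0,1]]`, or conjugate to `[[1,-1],[0,1]]`, and exactly one of these holds; in
particular the two unipotent matrices are not conjugate in `SL(2,ℝ)`. -/
theorem trace_two_fiber_SL2R :
    (∀ A : Matrix.SpecialLinearGroup (Fin 2) ℝ,
      Matrix.trace (A : Matrix (Fin 2) (Fin 2) ℝ) = 2 →
        ((A = 1 ∨ (∃ g, A = g * unipPlusSL2R * g⁻¹) ∨ (∃ g, A = g * unipMinusSL2R * g⁻¹)) ∧
         ¬(A = 1 ∧ ∃ g, A = g * unipPlusSL2R * g⁻¹) ∧
         ¬(A = 1 ∧ ∃ g, A = g * unipMinusSL2R * g⁻¹) ∧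
         ¬((∃ g, A = g * unipPlusSL2R * g⁻¹) ∧ (∃ g, A = g * unipMinusSL2R * g⁻¹)))) ∧
    ¬ ∃ g : Matrix.SpecialLinearGroup (Fin 2) ℝ,
        unipMinusSL2R = g * unipPlusSL2R * g⁻¹ := by
  constructor
  · intro A htr
    refine ⟨?_, ?_, ?_, ?_⟩
    · by_cases h1 : A = 1
      · exact Or.inl h1
      · exact Or.inr (exists_conj A htr h1)
    · rintro ⟨rfl, g, hg⟩
      exact unipPlus_ne_one (conj_eq_one g _ hg)
    · rintro ⟨rfl, g, hg⟩
      exact unipMinus_ne_one (conj_eq_one g _ hg)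
    · rintro ⟨⟨g, hg⟩, ⟨h, hh⟩⟩
      apply not_conj
      refine ⟨h⁻¹ * g, ?_⟩
      have key : h * unipMinusSL2R * h⁻¹ = g * unipPlusSL2R * g⁻¹ := by rw [← hh, ← hg]
      have h2 : unipMinusSL2R = h⁻¹ * (g * unipPlusSL2R * g⁻¹) * h := by
        rw [← key]; group
      rw [h2, mul_inv_rev, inv_inv]
      group
  · exact not_conj
end

section
/- The fiber Tr⁻¹(2) = {A ∈ SL(2,ℝ) : tr A = 2}, with the subspace topology induced from the matrix entries, is homeomorphic to the real cone V(x² + y² - z²) = {(x,y,z) ∈ ℝ³ : x² + y² = z²}; under such a homeomorphism the identity matrix I₂ corresponds to the singular point (0,0,0), and the two connected components of the complement of the singular point correspond to the two unipotent conjugacy classes. -/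
/-- `SL(2,ℝ)` carries the topology induced from the matrix entries. -/
instance : TopologicalSpace (Matrix.SpecialLinearGroup (Fin 2) ℝ) :=
  TopologicalSpace.induced
    ((↑) : Matrix.SpecialLinearGroup (Fin 2) ℝ → Matrix (Fin 2) (Fin 2) ℝ) inferInstance

/-- The real cone `V(x² + y² - z²) ⊆ ℝ³`. -/
def coneV : Set (ℝ × ℝ × ℝ) := {p | p.1 ^ 2 + p.2.1 ^ 2 = p.2.2 ^ 2}

/-- The complement of the singular point `(0,0,0)` in the cone. -/
def conePunctured : Set coneV := {q | (q : ℝ × ℝ × ℝ) ≠ (0, 0, 0)}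

/-- The fiber `Tr⁻¹(2)` of the trace map on `SL(2,ℝ)`. -/
def traceTwoFiberR : Set (Matrix.SpecialLinearGroup (Fin 2) ℝ) :=
  {A | Matrix.trace (A : Matrix (Fin 2) (Fin 2) ℝ) = 2}

/-- The conjugacy class of `[[1,1],[0,1]]`, viewed inside the fiber `Tr⁻¹(2)`. -/
def unipPlusClass : Set traceTwoFiberR :=
  {x | ∃ g : Matrix.SpecialLinearGroup (Fin 2) ℝ,
    (x : Matrix.SpecialLinearGroup (Fin 2) ℝ) = g * unipPlusSL2R * g⁻¹}

/-- The conjugacy class of `[[1,-1],[0,1]]`, viewed inside the fiber `Tr⁻¹(2)`. -/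
def unipMinusClass : Set traceTwoFiberR :=
  {x | ∃ g : Matrix.SpecialLinearGroup (Fin 2) ℝ,
    (x : Matrix.SpecialLinearGroup (Fin 2) ℝ) = g * unipMinusSL2R * g⁻¹}

abbrev SL2R := Matrix.SpecialLinearGroup (Fin 2) ℝ

lemma traceTwoFiberR_tr (A : traceTwoFiberR) :
    ((A : SL2R) : Matrix (Fin 2) (Fin 2) ℝ) 0 0 + ((A : SL2R) : Matrix (Fin 2) (Fin 2) ℝ) 1 1 = 2 := by
  have := A.2
  simp only [traceTwoFiberR, Set.mem_setOf_eq, Matrix.trace_fin_two] at this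
  exact this

lemma SL2R_det (A : SL2R) :
    (A : Matrix (Fin 2) (Fin 2) ℝ) 0 0 * (A : Matrix (Fin 2) (Fin 2) ℝ) 1 1
      - (A : Matrix (Fin 2) (Fin 2) ℝ) 0 1 * (A : Matrix (Fin 2) (Fin 2) ℝ) 1 0 = 1 := by
  have := A.2
  rw [Matrix.det_fin_two] at this
  exact this

noncomputable def Fmap (A : traceTwoFiberR) : coneV :=
  ⟨(((A : SL2R) : Matrix (Fin 2) (Fin 2) ℝ) 0 0 - 1,
    ((((A : SL2R) : Matrix (Fin 2) (Fin 2) ℝ) 0 1 + ((A : SL2R) : Matrix (Fin 2) (Fin 2) ℝ) 1 0)) / 2,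
    ((((A : SL2R) : Matrix (Fin 2) (Fin 2) ℝ) 0 1 - ((A : SL2R) : Matrix (Fin 2) (Fin 2) ℝ) 1 0)) / 2), by
    have hdet := SL2R_det A
    have htr := traceTwoFiberR_tr A
    simp only [coneV, Set.mem_setOf_eq]
    linear_combination (-1) * hdet + (((A : SL2R) : Matrix (Fin 2) (Fin 2) ℝ) 0 0) * htr⟩

noncomputable def Gmat (q : ℝ × ℝ × ℝ) : Matrix (Fin 2) (Fin 2) ℝ :=
  !![1 + q.1, q.2.1 + q.2.2; q.2.1 - q.2.2, 1 - q.1]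

noncomputable def Gmap (q : coneV) : traceTwoFiberR :=
  ⟨⟨Gmat q, by
      have hq := q.2
      simp only [coneV, Set.mem_setOf_eq] at hq
      rw [Gmat, Matrix.det_fin_two_of]
      linear_combination (-1) * hq⟩, by
    simp only [traceTwoFiberR, Set.mem_setOf_eq, Matrix.trace_fin_two]
    show Gmat (q : ℝ × ℝ × ℝ) 0 0 + Gmat (q : ℝ × ℝ × ℝ) 1 1 = 2
    simp [Gmat] <;> ring⟩

noncomputable def eHomeo : traceTwoFiberR ≃ₜ coneV where
  toFun := Fmap
  invFun := Gmap
  left_inv := by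
    intro A
    have htr := traceTwoFiberR_tr A
    apply Subtype.ext
    apply Subtype.ext
    ext i j
    fin_cases i <;> fin_cases j <;>
      simp [Gmap, Gmat, Fmap] <;> linarith
  right_inv := by
    intro q
    apply Subtype.ext
    simp only [Gmap, Gmat, Fmap]
    simp
  continuous_toFun := by
    have hentry : ∀ i j, Continuous fun A : traceTwoFiberR =>
        (((A : SL2R) : Matrix (Fin 2) (Fin 2) ℝ) i j) := by
      intro i j
      have h1 : Continuous fun A : traceTwoFiberR => ((A : SL2R) : Matrix (Fin 2) (Fin 2) ℝ) :=
        continuous_induced_dom.comp continuous_subtype_val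
      exact (continuous_apply j).comp ((continuous_apply i).comp h1)
    apply Continuous.subtype_mk
    exact ((hentry 0 0).sub continuous_const).prodMk
      ((((hentry 0 1).add (hentry 1 0)).div_const 2).prodMk
        (((hentry 0 1).sub (hentry 1 0)).div_const 2))
  continuous_invFun := by
    show Continuous Gmap
    apply Continuous.subtype_mk
    apply continuous_induced_rng.2
    show Continuous fun q : coneV => Gmat q
    apply continuous_matrix
    intro i j
    fin_cases i <;> fin_cases j <;> simp [Gmat] <;> fun_prop





def Pplus : Set coneV := {q | 0 < (q : ℝ × ℝ × ℝ).2.2}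
def Pminus : Set coneV := {q | (q : ℝ × ℝ × ℝ).2.2 < 0}

-- conjugation criterion: x = g U g⁻¹ ↔ x * g = g * U
lemma conj_iff (x g U : SL2R) : x = g * U * g⁻¹ ↔ x * g = g * U :=
  eq_mul_inv_iff_mul_eq

lemma plus_class_z_pos (x : traceTwoFiberR) (hx : x ∈ unipPlusClass) :
    0 < ((eHomeo x : ℝ × ℝ × ℝ)).2.2 := by
  obtain ⟨g, hg⟩ := hx
  have hmat : ((x : SL2R) : Matrix (Fin 2) (Fin 2) ℝ)
      = (g : Matrix (Fin 2) (Fin 2) ℝ) * (unipPlusSL2R : Matrix (Fin 2) (Fin 2) ℝ)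
        * Matrix.adjugate (g : Matrix (Fin 2) (Fin 2) ℝ) := by
    rw [← Matrix.SpecialLinearGroup.coe_inv, ← Matrix.SpecialLinearGroup.coe_mul,
      ← Matrix.SpecialLinearGroup.coe_mul, hg]
  set M := ((x : SL2R) : Matrix (Fin 2) (Fin 2) ℝ) with hM
  set P := (g : Matrix (Fin 2) (Fin 2) ℝ) with hP
  have h01 := congrFun (congrFun hmat 0) 1
  have h10 := congrFun (congrFun hmat 1) 0
  simp [Matrix.mul_apply, Fin.sum_univ_two, unipPlusSL2R, Matrix.adjugate_fin_two] at h01 h10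
  have hdetP := SL2R_det g
  show 0 < (M 0 1 - M 1 0) / 2
  nlinarith [h01, h10, hdetP, sq_nonneg (P 0 1), sq_nonneg (P 1 1),
    sq_nonneg (P 0 0 * P 0 1 + P 1 0 * P 1 1), sq_nonneg (P 0 0), sq_nonneg (P 1 0)]

lemma minus_class_z_neg (x : traceTwoFiberR) (hx : x ∈ unipMinusClass) :
    ((eHomeo x : ℝ × ℝ × ℝ)).2.2 < 0 := by
  obtain ⟨g, hg⟩ := hx
  have hmat : ((x : SL2R) : Matrix (Fin 2) (Fin 2) ℝ)
      = (g : Matrix (Fin 2) (Fin 2) ℝ) * (unipMinusSL2R : Matrix (Fin 2) (Fin 2) ℝ)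
        * Matrix.adjugate (g : Matrix (Fin 2) (Fin 2) ℝ) := by
    rw [← Matrix.SpecialLinearGroup.coe_inv, ← Matrix.SpecialLinearGroup.coe_mul,
      ← Matrix.SpecialLinearGroup.coe_mul, hg]
  set M := ((x : SL2R) : Matrix (Fin 2) (Fin 2) ℝ) with hM
  set P := (g : Matrix (Fin 2) (Fin 2) ℝ) with hP
  have h01 := congrFun (congrFun hmat 0) 1
  have h10 := congrFun (congrFun hmat 1) 0
  simp [Matrix.mul_apply, Fin.sum_univ_two, unipMinusSL2R, Matrix.adjugate_fin_two] at h01 h10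
  have hdetP := SL2R_det g
  show (M 0 1 - M 1 0) / 2 < 0
  nlinarith [h01, h10, hdetP, sq_nonneg (P 0 1), sq_nonneg (P 1 1),
    sq_nonneg (P 0 0 * P 0 1 + P 1 0 * P 1 1), sq_nonneg (P 0 0), sq_nonneg (P 1 0)]

lemma z_pos_mem_plus (q : coneV) (hz : 0 < (q : ℝ × ℝ × ℝ).2.2) :
    Gmap q ∈ unipPlusClass := by
  obtain ⟨⟨x, y, z⟩, hc⟩ := q
  simp only [coneV, Set.mem_setOf_eq] at hc
  simp only at hz
  rcases lt_or_eq_of_le (show (0:ℝ) ≤ y + z by nlinarith [sq_nonneg x]) with hb | hb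
  · set p := Real.sqrt (y + z) with hp
    have hp2 : p ^ 2 = y + z := Real.sq_sqrt hb.le
    have hppos : 0 < p := Real.sqrt_pos.2 hb
    refine ⟨⟨!![p, 0; -x/p, 1/p], by rw [Matrix.det_fin_two_of, zero_mul, sub_zero, mul_one_div_cancel hppos.ne']⟩, ?_⟩
    apply (conj_iff _ _ _).2
    apply Subtype.ext
    show Gmat (x, y, z) * _ = _ * (unipPlusSL2R : Matrix (Fin 2) (Fin 2) ℝ)
    ext i j
    fin_cases i <;> fin_cases j <;>
      simp [Gmat, Matrix.mul_apply, Fin.sum_univ_two, unipPlusSL2R]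
    · field_simp
      linear_combination x * hp2
    · field_simp
      linear_combination -hp2
    · field_simp
      linear_combination (y - z) * hp2 + hc
    · field_simp
      ring
  · have hx0 : x = 0 := by nlinarith [sq_nonneg x]
    set t := Real.sqrt (2 * z) with ht
    have ht2 : t ^ 2 = 2 * z := Real.sq_sqrt (by linarith)
    have htpos : 0 < t := Real.sqrt_pos.2 (by linarith)
    refine ⟨⟨!![0, -1/t; t, 0], by rw [Matrix.det_fin_two_of, mul_zero, zero_sub, div_mul_cancel₀ _ htpos.ne', neg_neg]⟩, ?_⟩
    apply (conj_iff _ _ _).2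
    apply Subtype.ext
    show Gmat (x, y, z) * _ = _ * (unipPlusSL2R : Matrix (Fin 2) (Fin 2) ℝ)
    ext i j
    fin_cases i <;> fin_cases j <;>
      simp [Gmat, Matrix.mul_apply, Fin.sum_univ_two, unipPlusSL2R]
    · exact Or.inl hb.symm
    · rw [hx0]; ring
    · rw [hx0]; ring
    · field_simp
      linear_combination -ht2 + hb

lemma z_neg_mem_minus (q : coneV) (hz : (q : ℝ × ℝ × ℝ).2.2 < 0) :
    Gmap q ∈ unipMinusClass := by
  obtain ⟨⟨x, y, z⟩, hc⟩ := q
  simp only [coneV, Set.mem_setOf_eq] at hc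
  simp only at hz
  rcases lt_or_eq_of_le (show y + z ≤ 0 by nlinarith [sq_nonneg x]) with hb | hb
  · set p := Real.sqrt (-(y + z)) with hp
    have hp2 : p ^ 2 = -(y + z) := Real.sq_sqrt (by linarith)
    have hppos : 0 < p := Real.sqrt_pos.2 (by linarith)
    refine ⟨⟨!![p, 0; x/p, 1/p], by rw [Matrix.det_fin_two_of, zero_mul, sub_zero, mul_one_div_cancel hppos.ne']⟩, ?_⟩
    apply (conj_iff _ _ _).2
    apply Subtype.ext
    show Gmat (x, y, z) * _ = _ * (unipMinusSL2R : Matrix (Fin 2) (Fin 2) ℝ)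
    ext i j
    fin_cases i <;> fin_cases j <;>
      simp [Gmat, Matrix.mul_apply, Fin.sum_univ_two, unipMinusSL2R]
    · field_simp
      linear_combination x * hp2
    · field_simp
      linear_combination hp2
    · field_simp
      linear_combination (y - z) * hp2 - hc
    · field_simp
      ring
  · have hx0 : x = 0 := by nlinarith [sq_nonneg x]
    set t := Real.sqrt (-(2 * z)) with ht
    have ht2 : t ^ 2 = -(2 * z) := Real.sq_sqrt (by linarith)
    have htpos : 0 < t := Real.sqrt_pos.2 (by linarith)
    refine ⟨⟨!![0, -1/t; t, 0], by rw [Matrix.det_fin_two_of, mul_zero, zero_sub, div_mul_cancel₀ _ htpos.ne', neg_neg]⟩, ?_⟩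
    apply (conj_iff _ _ _).2
    apply Subtype.ext
    show Gmat (x, y, z) * _ = _ * (unipMinusSL2R : Matrix (Fin 2) (Fin 2) ℝ)
    ext i j
    fin_cases i <;> fin_cases j <;>
      simp [Gmat, Matrix.mul_apply, Fin.sum_univ_two, unipMinusSL2R]
    · exact Or.inl hb
    · rw [hx0]; ring
    · rw [hx0]; ring
    · field_simp
      linear_combination ht2 - hb


noncomputable def gpar (rθ : ℝ × ℝ) : coneV :=
  ⟨(rθ.1 * Real.cos rθ.2, rθ.1 * Real.sin rθ.2, rθ.1), by
    simp only [coneV, Set.mem_setOf_eq]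
    have := Real.sin_sq_add_cos_sq rθ.2
    nlinarith [this]⟩

lemma gpar_continuous : Continuous gpar := by
  apply Continuous.subtype_mk
  fun_prop

lemma exists_angle (x y z : ℝ) (hc : x ^ 2 + y ^ 2 = z ^ 2) (hz : z ≠ 0) :
    ∃ θ : ℝ, z * Real.cos θ = x ∧ z * Real.sin θ = y := by
  set w : ℂ := ⟨x * z, y * z⟩ with hw
  have hw0 : w ≠ 0 := by
    intro h
    rw [Complex.ext_iff] at h
    simp only [hw, Complex.zero_re, Complex.zero_im] at h
    have hx : x * z = 0 := h.1
    have hy : y * z = 0 := h.2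
    rcases mul_eq_zero.1 hx with h1 | h1 <;> rcases mul_eq_zero.1 hy with h2 | h2 <;>
      first
        | exact hz h1
        | exact hz h2
        | (apply hz; nlinarith)
  have habs : ‖w‖ = z ^ 2 := by
    have h1 : (‖w‖) ^ 2 = (z ^ 2) ^ 2 := by
      rw [Complex.sq_norm, Complex.normSq_apply]
      simp only [hw]
      nlinarith
    have h2 : (0:ℝ) ≤ ‖w‖ := norm_nonneg w
    have h3 : (0:ℝ) ≤ z ^ 2 := sq_nonneg z
    nlinarith [h1, h2, h3]
  have hz2 : (0:ℝ) < z ^ 2 := by positivity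
  refine ⟨Complex.arg w, ?_, ?_⟩
  · have := Complex.cos_arg hw0
    rw [habs] at this
    simp only [hw] at this
    rw [this]
    field_simp
  · have := Complex.sin_arg w
    rw [habs] at this
    simp only [hw] at this
    rw [this]
    field_simp

lemma Pplus_eq_image : Pplus = gpar '' (Set.Ioi 0 ×ˢ Set.univ) := by
  ext q
  constructor
  · rintro hq
    obtain ⟨⟨x, y, z⟩, hc⟩ := q
    simp only [Pplus, Set.mem_setOf_eq] at hq
    -- no-op
    simp only [coneV, Set.mem_setOf_eq] at hc
    obtain ⟨θ, hcos, hsin⟩ := exists_angle x y z hc (ne_of_gt hq)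
    refine ⟨(z, θ), ⟨hq, trivial⟩, ?_⟩
    apply Subtype.ext
    show ((z * Real.cos θ, z * Real.sin θ, z) : ℝ × ℝ × ℝ) = (x, y, z)
    rw [hcos, hsin]
  · rintro ⟨⟨r, θ⟩, ⟨hr, -⟩, rfl⟩
    simp only [Pplus, gpar, Set.mem_setOf_eq]
    exact hr

lemma Pminus_eq_image : Pminus = gpar '' (Set.Iio 0 ×ˢ Set.univ) := by
  ext q
  constructor
  · rintro hq
    obtain ⟨⟨x, y, z⟩, hc⟩ := q
    simp only [Pminus, Set.mem_setOf_eq] at hq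
    -- no-op
    simp only [coneV, Set.mem_setOf_eq] at hc
    obtain ⟨θ, hcos, hsin⟩ := exists_angle x y z hc (ne_of_lt hq)
    refine ⟨(z, θ), ⟨hq, trivial⟩, ?_⟩
    apply Subtype.ext
    show ((z * Real.cos θ, z * Real.sin θ, z) : ℝ × ℝ × ℝ) = (x, y, z)
    rw [hcos, hsin]
  · rintro ⟨⟨r, θ⟩, ⟨hr, -⟩, rfl⟩
    simp only [Pminus, gpar, Set.mem_setOf_eq]
    exact hr

lemma Pplus_preconnected : IsPreconnected Pplus := by
  rw [Pplus_eq_image]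
  exact (isPreconnected_Ioi.prod isPreconnected_univ).image _ gpar_continuous.continuousOn

lemma Pminus_preconnected : IsPreconnected Pminus := by
  rw [Pminus_eq_image]
  exact (isPreconnected_Iio.prod isPreconnected_univ).image _ gpar_continuous.continuousOn

lemma zcoord_continuous : Continuous fun q : coneV => (q : ℝ × ℝ × ℝ).2.2 :=
  (continuous_snd.comp continuous_snd).comp continuous_subtype_val

lemma Pplus_open : IsOpen Pplus := isOpen_Ioi.preimage zcoord_continuous
lemma Pminus_open : IsOpen Pminus := isOpen_Iio.preimage zcoord_continuous

lemma Pplus_subset : Pplus ⊆ conePunctured := by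
  intro q hq
  simp only [Pplus, Set.mem_setOf_eq] at hq
  simp only [conePunctured, Set.mem_setOf_eq]
  intro h
  rw [h] at hq
  exact lt_irrefl 0 hq

lemma Pminus_subset : Pminus ⊆ conePunctured := by
  intro q hq
  simp only [Pminus, Set.mem_setOf_eq] at hq
  simp only [conePunctured, Set.mem_setOf_eq]
  intro h
  rw [h] at hq
  exact lt_irrefl 0 hq

lemma punctured_subset_union : conePunctured ⊆ Pplus ∪ Pminus := by
  rintro ⟨⟨x, y, z⟩, hc⟩ hq
  simp only [conePunctured, Set.mem_setOf_eq] at hq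
  simp only [coneV, Set.mem_setOf_eq] at hc
  rcases lt_trichotomy z 0 with h | h | h
  · exact Or.inr h
  · exfalso
    apply hq
    have hx : x = 0 := by nlinarith [sq_nonneg x, sq_nonneg y]
    have hy : y = 0 := by nlinarith [sq_nonneg x, sq_nonneg y]
    simp [hx, hy, h]
  · exact Or.inl h

lemma disjoint_Pplus_Pminus : Disjoint Pplus Pminus := by
  rw [Set.disjoint_iff]
  rintro q ⟨h1, h2⟩
  simp only [Pplus, Pminus, Set.mem_setOf_eq] at h1 h2
  exact absurd (h1.trans h2) (lt_irrefl 0)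

lemma component_plus (p : coneV) (hp : p ∈ Pplus) :
    connectedComponentIn conePunctured p = Pplus := by
  apply Set.Subset.antisymm
  · exact (isPreconnected_connectedComponentIn).subset_left_of_subset_union
      Pplus_open Pminus_open disjoint_Pplus_Pminus
      ((connectedComponentIn_subset _ _).trans punctured_subset_union)
      ⟨p, mem_connectedComponentIn (Pplus_subset hp), hp⟩
  · exact Pplus_preconnected.subset_connectedComponentIn hp Pplus_subset

lemma component_minus (p : coneV) (hp : p ∈ Pminus) :
    connectedComponentIn conePunctured p = Pminus := by
  apply Set.Subset.antisymm
  · have := (isPreconnected_connectedComponentIn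
      (F := conePunctured) (x := p)).subset_left_of_subset_union
      Pminus_open Pplus_open disjoint_Pplus_Pminus.symm
      ((connectedComponentIn_subset _ _).trans
        (punctured_subset_union.trans (Set.union_comm _ _).subset))
      ⟨p, mem_connectedComponentIn (Pminus_subset hp), hp⟩
    exact this
  · exact Pminus_preconnected.subset_connectedComponentIn hp Pminus_subset

lemma image_plus : eHomeo '' unipPlusClass = Pplus := by
  apply Set.Subset.antisymm
  · rintro _ ⟨x, hx, rfl⟩
    exact plus_class_z_pos x hx
  · intro q hq
    exact ⟨Gmap q, z_pos_mem_plus q hq, eHomeo.toEquiv.right_inv q⟩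

lemma image_minus : eHomeo '' unipMinusClass = Pminus := by
  apply Set.Subset.antisymm
  · rintro _ ⟨x, hx, rfl⟩
    exact minus_class_z_neg x hx
  · intro q hq
    exact ⟨Gmap q, z_neg_mem_minus q hq, eHomeo.toEquiv.right_inv q⟩


/-- The fiber `Tr⁻¹(2) ⊆ SL(2,ℝ)` is homeomorphic to the real cone
`V(x² + y² - z²) ⊆ ℝ³`; under such a homeomorphism, `I₂` corresponds to the singular
point `(0,0,0)`, and the two connected components of the complement of the singular point
correspond to the two unipotent conjugacy classes. -/
theorem trace_two_fiber_homeomorphic_cone :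
    ∃ e : traceTwoFiberR ≃ₜ coneV,
      ((e ⟨1, by simp [traceTwoFiberR]⟩ : ℝ × ℝ × ℝ) = (0, 0, 0)) ∧
      (∃ p ∈ conePunctured, connectedComponentIn conePunctured p = e '' unipPlusClass) ∧
      (∃ p ∈ conePunctured, connectedComponentIn conePunctured p = e '' unipMinusClass) ∧
      e '' unipPlusClass ≠ e '' unipMinusClass ∧
      (∀ p ∈ conePunctured,
        connectedComponentIn conePunctured p = e '' unipPlusClass ∨
        connectedComponentIn conePunctured p = e '' unipMinusClass) := by
  refine ⟨eHomeo, ?_, ?_, ?_, ?_, ?_⟩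
  · show ((Fmap _ : coneV) : ℝ × ℝ × ℝ) = (0, 0, 0)
    simp [Fmap, Matrix.SpecialLinearGroup.coe_one, Matrix.one_apply]
  · refine ⟨⟨(1, 0, 1), by norm_num [coneV]⟩, ?_, ?_⟩
    · simp only [conePunctured, Set.mem_setOf_eq]
      intro h
      rw [Prod.ext_iff] at h
      norm_num at h
    · rw [image_plus]
      exact component_plus _ (show (0:ℝ) < 1 by norm_num)
  · refine ⟨⟨(1, 0, -1), by norm_num [coneV]⟩, ?_, ?_⟩
    · simp only [conePunctured, Set.mem_setOf_eq]
      intro h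
      rw [Prod.ext_iff] at h
      norm_num at h
    · rw [image_minus]
      exact component_minus _ (show (-1:ℝ) < 0 by norm_num)
  · rw [image_plus, image_minus]
    intro h
    have h1 : (⟨(1, 0, 1), by norm_num [coneV]⟩ : coneV) ∈ Pplus := by
      show (0:ℝ) < 1; norm_num
    rw [h] at h1
    have : ((1:ℝ), (0:ℝ), (1:ℝ)).2.2 < 0 := h1
    norm_num at this
  · intro p hp
    rcases punctured_subset_union hp with h | h
    · left; rw [image_plus]; exact component_plus p h
    · right; rw [image_minus]; exact component_minus p h
end

section
/- In SL(2,ℝ) with the topology induced from the matrix entries, the closure of the conjugacy class of [[1,1],[0,1]] is equal to that conjugacy class together with the identity matrix I₂; and likewise the closure of the conjugacy class of [[1,-1],[0,1]] is that class together with I₂. -/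
open Matrix Filter

local notation "SL2" => Matrix.SpecialLinearGroup (Fin 2) ℝ



lemma sl2_conj_coe (ε : ℝ) (u : SL2)
    (hu : (u : Matrix (Fin 2) (Fin 2) ℝ) = !![1, ε; 0, 1]) (g : SL2) :
    ((g * u * g⁻¹ : SL2) : Matrix (Fin 2) (Fin 2) ℝ) =
      !![1 - ε * ((g : Matrix (Fin 2) (Fin 2) ℝ) 0 0 * (g : Matrix (Fin 2) (Fin 2) ℝ) 1 0),
         ε * ((g : Matrix (Fin 2) (Fin 2) ℝ) 0 0 * (g : Matrix (Fin 2) (Fin 2) ℝ) 0 0);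
         -(ε * ((g : Matrix (Fin 2) (Fin 2) ℝ) 1 0 * (g : Matrix (Fin 2) (Fin 2) ℝ) 1 0)),
         1 + ε * ((g : Matrix (Fin 2) (Fin 2) ℝ) 0 0 * (g : Matrix (Fin 2) (Fin 2) ℝ) 1 0)] := by
  set p := (g : Matrix (Fin 2) (Fin 2) ℝ) 0 0 with hp
  set q := (g : Matrix (Fin 2) (Fin 2) ℝ) 0 1 with hq
  set r := (g : Matrix (Fin 2) (Fin 2) ℝ) 1 0 with hr
  set s := (g : Matrix (Fin 2) (Fin 2) ℝ) 1 1 with hs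
  have hdet : p * s - q * r = 1 := by
    have := g.2
    rw [Matrix.det_fin_two] at this
    linarith [this]
  have hg : (g : Matrix (Fin 2) (Fin 2) ℝ) = !![p, q; r, s] := Matrix.eta_fin_two _
  rw [Matrix.SpecialLinearGroup.coe_mul, Matrix.SpecialLinearGroup.coe_mul,
    Matrix.SpecialLinearGroup.coe_inv, hu, hg, Matrix.adjugate_fin_two]
  ext i j
  fin_cases i <;> fin_cases j <;>
    simp [Matrix.mul_apply, Fin.sum_univ_two] <;> nlinarith [hdet]

lemma sl2_char (ε : ℝ) (hε : ε = 1 ∨ ε = -1) (u : SL2)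
    (hu : (u : Matrix (Fin 2) (Fin 2) ℝ) = !![1, ε; 0, 1]) (A : SL2) :
    (∃ g : SL2, A = g * u * g⁻¹) ↔
      ((A : Matrix (Fin 2) (Fin 2) ℝ) 0 0 + (A : Matrix (Fin 2) (Fin 2) ℝ) 1 1 = 2 ∧
       0 ≤ ε * (A : Matrix (Fin 2) (Fin 2) ℝ) 0 1 ∧
       ε * (A : Matrix (Fin 2) (Fin 2) ℝ) 1 0 ≤ 0 ∧ A ≠ 1) := by
  have hε2 : ε * ε = 1 := by rcases hε with h | h <;> simp [h]
  have hε0 : ε ≠ 0 := by rcases hε with h | h <;> simp [h]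
  constructor
  · rintro ⟨g, rfl⟩
    have hcoe := sl2_conj_coe ε u hu g
    set p := (g : Matrix (Fin 2) (Fin 2) ℝ) 0 0 with hp
    set r := (g : Matrix (Fin 2) (Fin 2) ℝ) 1 0 with hr
    refine ⟨?_, ?_, ?_, ?_⟩
    · rw [hcoe]; simp; ring
    · rw [hcoe]; simp; nlinarith
    · rw [hcoe]; simp; nlinarith
    · intro h
      have h1 : ((g * u * g⁻¹ : SL2) : Matrix (Fin 2) (Fin 2) ℝ) = 1 := by rw [h]; rfl
      rw [hcoe] at h1
      have hb : ε * (p * p) = 0 := by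
        have := Matrix.ext_iff.mpr h1 0 1; simpa [Matrix.one_apply] using this
      have hc : ε * (r * r) = 0 := by
        have := Matrix.ext_iff.mpr h1 1 0; simpa [Matrix.one_apply] using this
      have hp0 : p = 0 := mul_self_eq_zero.mp ((mul_eq_zero.mp hb).resolve_left hε0)
      have hr0 : r = 0 := mul_self_eq_zero.mp ((mul_eq_zero.mp hc).resolve_left hε0)
      have hdet : p * (g : Matrix (Fin 2) (Fin 2) ℝ) 1 1
          - (g : Matrix (Fin 2) (Fin 2) ℝ) 0 1 * r = 1 := by
        have := g.2
        rw [Matrix.det_fin_two] at this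
        linarith [this]
      rw [hp0, hr0] at hdet
      norm_num at hdet
  · rintro ⟨htr, hb, hc, hne⟩
    set a := (A : Matrix (Fin 2) (Fin 2) ℝ) 0 0 with ha'
    set b := (A : Matrix (Fin 2) (Fin 2) ℝ) 0 1 with hb'
    set c := (A : Matrix (Fin 2) (Fin 2) ℝ) 1 0 with hc'
    set d := (A : Matrix (Fin 2) (Fin 2) ℝ) 1 1 with hd'
    have hdet : a * d - b * c = 1 := by
      have := A.2
      rw [Matrix.det_fin_two] at this
      linarith [this]
    have hkey : b * c = -((a - 1) * (a - 1)) := by linear_combination a * htr - hdet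
    have hA : (A : Matrix (Fin 2) (Fin 2) ℝ) = !![a, b; c, d] := Matrix.eta_fin_two _
    rcases lt_or_eq_of_le hb with hbpos | hbzero
    · -- ε * b > 0
      have hbne : b ≠ 0 := by
        intro h; rw [h, mul_zero] at hbpos; exact lt_irrefl 0 hbpos
      set p := Real.sqrt (ε * b) with hpdef
      have hppos : 0 < p := Real.sqrt_pos.mpr hbpos
      have hpne : p ≠ 0 := ne_of_gt hppos
      have hp2 : p * p = ε * b := Real.mul_self_sqrt hbpos.le
      have hgdet : Matrix.det !![p, 0; -(ε * (a - 1) / p), 1 / p] = 1 := by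
        rw [Matrix.det_fin_two_of]; field_simp; ring
      set g : SL2 := ⟨!![p, 0; -(ε * (a - 1) / p), 1 / p], hgdet⟩ with hg
      refine ⟨g, Subtype.ext ?_⟩
      rw [sl2_conj_coe ε u hu g, hA]
      have e00 : (g : Matrix (Fin 2) (Fin 2) ℝ) 0 0 = p := by simp [hg]
      have e10 : (g : Matrix (Fin 2) (Fin 2) ℝ) 1 0 = -(ε * (a - 1) / p) := by simp [hg]
      rw [e00, e10]
      have E1 : 1 - ε * (p * -(ε * (a - 1) / p)) = a := by
        field_simp
        linear_combination (a - 1) * hε2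
      have E2 : ε * (p * p) = b := by
        rw [hp2]; linear_combination b * hε2
      have E3 : -(ε * (-(ε * (a - 1) / p) * -(ε * (a - 1) / p))) = c := by
        field_simp
        linear_combination (-c) * hp2 - ε * hkey - ε * (a - 1) * (a - 1) * hε2
      have E4 : 1 + ε * (p * -(ε * (a - 1) / p)) = d := by
        field_simp
        linear_combination (-1) * htr + (1 - a) * hε2
      rw [E1, E2, E3, E4]
    · -- ε * b = 0, so b = 0
      have hb0 : b = 0 := ((mul_eq_zero.mp hbzero.symm).resolve_left hε0)
      have ha1 : a = 1 := by nlinarith [hkey]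
      have hd1 : d = 1 := by linarith
      have hcne : c ≠ 0 := by
        intro h
        apply hne
        apply Subtype.ext
        rw [hA, ha1, hb0, h, hd1]
        simp [Matrix.SpecialLinearGroup.coe_one, Matrix.one_fin_two]
      have hcneg : 0 < -(ε * c) := by
        rcases lt_or_eq_of_le hc with h | h
        · linarith
        · exact absurd h (mul_ne_zero hε0 hcne)
      set r := Real.sqrt (-(ε * c)) with hrdef
      have hrpos : 0 < r := Real.sqrt_pos.mpr hcneg
      have hrne : r ≠ 0 := ne_of_gt hrpos
      have hr2 : r * r = -(ε * c) := Real.mul_self_sqrt hcneg.le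
      have hgdet : Matrix.det !![0, -(1 / r); r, 0] = 1 := by
        rw [Matrix.det_fin_two_of]; field_simp; norm_num
      set g : SL2 := ⟨!![0, -(1 / r); r, 0], hgdet⟩ with hg
      refine ⟨g, Subtype.ext ?_⟩
      rw [sl2_conj_coe ε u hu g, hA, ha1, hb0, hd1]
      have e00 : (g : Matrix (Fin 2) (Fin 2) ℝ) 0 0 = 0 := by simp [hg]
      have e10 : (g : Matrix (Fin 2) (Fin 2) ℝ) 1 0 = r := by simp [hg]
      rw [e00, e10]
      ext i j
      fin_cases i <;> fin_cases j <;> simp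
      linear_combination -c * hε2 + ε * hr2

lemma sl2_entry_continuous (i j : Fin 2) :
    Continuous (fun A : SL2 => (A : Matrix (Fin 2) (Fin 2) ℝ) i j) :=
  (continuous_induced_dom : Continuous ((↑) : SL2 → Matrix (Fin 2) (Fin 2) ℝ)).matrix_elem i j

lemma sl2_S_closed (ε : ℝ) :
    IsClosed {A : SL2 | (A : Matrix (Fin 2) (Fin 2) ℝ) 0 0 + (A : Matrix (Fin 2) (Fin 2) ℝ) 1 1 = 2 ∧
      0 ≤ ε * (A : Matrix (Fin 2) (Fin 2) ℝ) 0 1 ∧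
      ε * (A : Matrix (Fin 2) (Fin 2) ℝ) 1 0 ≤ 0} := by
  apply IsClosed.inter
  · exact isClosed_eq ((sl2_entry_continuous 0 0).add (sl2_entry_continuous 1 1)) continuous_const
  apply IsClosed.inter
  · exact isClosed_le continuous_const (continuous_const.mul (sl2_entry_continuous 0 1))
  · exact isClosed_le (continuous_const.mul (sl2_entry_continuous 1 0)) continuous_const

lemma sl2_seq_tendsto (ε : ℝ) (f : ℕ → SL2)
    (hf : ∀ n, (f n : Matrix (Fin 2) (Fin 2) ℝ) = !![1, ε / (n + 1); 0, 1]) :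
    Tendsto f atTop (nhds (1 : SL2)) := by
  rw [nhds_induced, tendsto_comap_iff]
  have h0 : Tendsto (fun n : ℕ => ε / (n + 1)) atTop (nhds 0) :=
    tendsto_const_nhds.div_atTop
      (tendsto_atTop_add_const_right _ 1 tendsto_natCast_atTop_atTop)
  refine tendsto_pi_nhds.mpr ?_
  intro i
  rw [tendsto_pi_nhds]
  intro j
  have : ((1 : SL2) : Matrix (Fin 2) (Fin 2) ℝ) = !![1, 0; 0, 1] := by
    simp [Matrix.one_fin_two]
  rw [Function.comp_def]
  simp only [hf, this]
  fin_cases i <;> fin_cases j <;> simp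
  all_goals exact h0


lemma sl2_closure_class (ε : ℝ) (hε : ε = 1 ∨ ε = -1) (u : SL2)
    (hu : (u : Matrix (Fin 2) (Fin 2) ℝ) = !![1, ε; 0, 1]) :
    closure {A : SL2 | ∃ g : SL2, A = g * u * g⁻¹} =
      {A : SL2 | ∃ g : SL2, A = g * u * g⁻¹} ∪ {1} := by
  apply Set.Subset.antisymm
  · have hsub : {A : SL2 | ∃ g : SL2, A = g * u * g⁻¹} ⊆
        {A : SL2 | (A : Matrix (Fin 2) (Fin 2) ℝ) 0 0 + (A : Matrix (Fin 2) (Fin 2) ℝ) 1 1 = 2 ∧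
          0 ≤ ε * (A : Matrix (Fin 2) (Fin 2) ℝ) 0 1 ∧
          ε * (A : Matrix (Fin 2) (Fin 2) ℝ) 1 0 ≤ 0} := by
      intro A hA
      have := (sl2_char ε hε u hu A).mp hA
      exact ⟨this.1, this.2.1, this.2.2.1⟩
    intro A hA
    have hAS := closure_minimal hsub (sl2_S_closed ε) hA
    by_cases h1 : A = 1
    · exact Or.inr h1
    · exact Or.inl ((sl2_char ε hε u hu A).mpr ⟨hAS.1, hAS.2.1, hAS.2.2, h1⟩)
  · rintro A (hA | hA)
    · exact subset_closure hA
    · rw [Set.mem_singleton_iff] at hA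
      subst hA
      have hε0 : ε ≠ 0 := by rcases hε with h | h <;> simp [h]
      have hdet : ∀ n : ℕ, Matrix.det !![(1 : ℝ), ε / (n + 1); 0, 1] = 1 := by
        intro n; rw [Matrix.det_fin_two_of]; ring
      set f : ℕ → SL2 := fun n => ⟨!![(1 : ℝ), ε / (n + 1); 0, 1], hdet n⟩ with hf
      have hfc : ∀ n, (f n : Matrix (Fin 2) (Fin 2) ℝ) = !![1, ε / (n + 1); 0, 1] :=
        fun n => rfl
      apply mem_closure_of_tendsto (sl2_seq_tendsto ε f hfc)
      apply Filter.Eventually.of_forall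
      intro n
      apply (sl2_char ε hε u hu (f n)).mpr
      have h1 : (f n : Matrix (Fin 2) (Fin 2) ℝ) 0 0 = 1 := by rw [hfc]; simp
      have h2 : (f n : Matrix (Fin 2) (Fin 2) ℝ) 0 1 = ε / (n + 1) := by rw [hfc]; simp
      have h3 : (f n : Matrix (Fin 2) (Fin 2) ℝ) 1 0 = 0 := by rw [hfc]; simp
      have h4 : (f n : Matrix (Fin 2) (Fin 2) ℝ) 1 1 = 1 := by rw [hfc]; simp
      have hn : (0 : ℝ) < (n : ℝ) + 1 := by positivity
      refine ⟨by rw [h1, h4]; norm_num, ?_, by rw [h3]; simp, ?_⟩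
      · rw [h2]
        have : ε * (ε / (n + 1)) = ε * ε / (n + 1) := by ring
        rw [this]
        rcases hε with h | h <;> rw [h] <;> positivity
      · intro h
        have : (f n : Matrix (Fin 2) (Fin 2) ℝ) 0 1 = 0 := by
          rw [h]; simp [Matrix.SpecialLinearGroup.coe_one, Matrix.one_apply]
        rw [h2] at this
        exact hε0 (by field_simp at this; simpa using this)

/-- In `SL(2,ℝ)`, the closure of the conjugacy class of `[[1,1],[0,1]]`
is that class together with `I₂`, and likewise for the conjugacy class of
`[[1,-1],[0,1]]`. -/
theorem closure_unipotent_classes_SL2R :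
    closure {A : Matrix.SpecialLinearGroup (Fin 2) ℝ |
        ∃ g : Matrix.SpecialLinearGroup (Fin 2) ℝ, A = g * unipPlusSL2R * g⁻¹} =
      {A : Matrix.SpecialLinearGroup (Fin 2) ℝ |
        ∃ g : Matrix.SpecialLinearGroup (Fin 2) ℝ, A = g * unipPlusSL2R * g⁻¹} ∪ {1} ∧
    closure {A : Matrix.SpecialLinearGroup (Fin 2) ℝ |
        ∃ g : Matrix.SpecialLinearGroup (Fin 2) ℝ, A = g * unipMinusSL2R * g⁻¹} =
      {A : Matrix.SpecialLinearGroup (Fin 2) ℝ |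
        ∃ g : Matrix.SpecialLinearGroup (Fin 2) ℝ, A = g * unipMinusSL2R * g⁻¹} ∪ {1} := by
  constructor
  · exact sl2_closure_class 1 (Or.inl rfl) unipPlusSL2R rfl
  · exact sl2_closure_class (-1) (Or.inr rfl) unipMinusSL2R rfl
end

section
/- For every n ≥ 1, the Cartan decomposition map m : SO(n) × p → SL(n,ℝ), m(k, ζ) = k · exp(ζ), where p is the space of symmetric traceless real n×n matrices and exp denotes the matrix exponential, is a bijection: every A ∈ SL(n,ℝ) can be written uniquely as A = k · exp(ζ) with k ∈ SO(n) and ζ symmetric and traceless. -/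
open NormedSpace

namespace CartanAux
open Matrix

variable {m : Type*} [Fintype m] [DecidableEq m]

lemma trace_cfc_aux {S : Matrix m m ℝ} (hS : S.IsHermitian) (f : ℝ → ℝ) :
    (cfc f S).trace = ∑ i, f (hS.eigenvalues i) := by
  rw [hS.cfc_eq, Matrix.IsHermitian.cfc, Unitary.conjStarAlgAut_apply, Matrix.trace_mul_cycle]
  simp [Matrix.trace_diagonal, Function.comp]

lemma det_cfc_aux {S : Matrix m m ℝ} (hS : S.IsHermitian) (f : ℝ → ℝ) :
    (cfc f S).det = ∏ i, f (hS.eigenvalues i) := by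
  rw [hS.cfc_eq, Matrix.IsHermitian.cfc, Unitary.conjStarAlgAut_apply, Matrix.det_mul, Matrix.det_mul]
  rw [mul_comm, ← mul_assoc, ← Matrix.det_mul]
  simp [Matrix.det_diagonal, Function.comp]

lemma isSelfAdjoint_iff_transpose (M : Matrix m m ℝ) :
    IsSelfAdjoint M ↔ Mᵀ = M := by
  rw [isSelfAdjoint_iff, Matrix.star_eq_conjTranspose,
    Matrix.conjTranspose_eq_transpose_of_trivial]

section
variable [Nonempty m]

/-- trace of a hermitian real matrix is the sum of eigenvalues. -/
lemma trace_eq_sum_eig {S : Matrix m m ℝ} (hS : S.IsHermitian) :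
    S.trace = ∑ i, hS.eigenvalues i := by
  have h := trace_cfc_aux hS id
  rwa [cfc_id ℝ S hS.isSelfAdjoint] at h

/-- determinant of `exp` of a selfadjoint real matrix. -/
lemma det_exp_eq {z : Matrix m m ℝ} (hz : IsSelfAdjoint z) :
    (exp z).det = Real.exp z.trace := by
  letI : NormedRing (Matrix m m ℝ) := Matrix.instL2OpNormedRing
  letI : NormedAlgebra ℝ (Matrix m m ℝ) := Matrix.instL2OpNormedAlgebra
  haveI : CompleteSpace (Matrix m m ℝ) := FiniteDimensional.complete ℝ _
  have hz' : z.IsHermitian := hz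
  rw [← CFC.real_exp_eq_normedSpace_exp hz, det_cfc_aux hz', ← Real.exp_sum,
    trace_eq_sum_eig hz']

end
end CartanAux

open Matrix CartanAux in
/-- (Cartan decomposition for `SL(n,ℝ)`.) For every `n ≥ 1`, every
real `n×n` matrix `A` of determinant `1` can be written uniquely as `A = k · exp(ζ)` with
`k ∈ SO(n)` (i.e. `kᵀk = 1` and `det k = 1`) and `ζ` symmetric and traceless; that is,
the map `(k, ζ) ↦ k · exp(ζ)` from `SO(n) × p` to `SL(n,ℝ)` is a bijection. -/
theorem cartan_decomposition_SLnR (n : ℕ) (hn : 1 ≤ n)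
    (A : Matrix (Fin n) (Fin n) ℝ) (hA : A.det = 1) :
    ∃! p : {k : Matrix (Fin n) (Fin n) ℝ // k.transpose * k = 1 ∧ k.det = 1} ×
           {z : Matrix (Fin n) (Fin n) ℝ // z.transpose = z ∧ z.trace = 0},
      A = (p.1 : Matrix (Fin n) (Fin n) ℝ) *
        NormedSpace.exp (p.2 : Matrix (Fin n) (Fin n) ℝ) := by
  classical
  haveI : Nonempty (Fin n) := ⟨⟨0, hn⟩⟩
  letI : NormedRing (Matrix (Fin n) (Fin n) ℝ) := Matrix.instL2OpNormedRing
  letI : NormedAlgebra ℝ (Matrix (Fin n) (Fin n) ℝ) := Matrix.instL2OpNormedAlgebra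
  haveI : CompleteSpace (Matrix (Fin n) (Fin n) ℝ) := FiniteDimensional.complete ℝ _
  set S : Matrix (Fin n) (Fin n) ℝ := Aᵀ * A with hSdef
  have hPS : S.PosSemidef := by
    have := Matrix.posSemidef_conjTranspose_mul_self A
    rwa [Matrix.conjTranspose_eq_transpose_of_trivial] at this
  have hS : S.IsHermitian := hPS.isHermitian
  have hSsa : IsSelfAdjoint S := hS
  have hdetS : S.det = 1 := by
    rw [hSdef, Matrix.det_mul, Matrix.det_transpose, hA, one_mul]
  have hprod : ∏ i, hS.eigenvalues i = 1 := by
    have h := hS.det_eq_prod_eigenvalues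
    rw [hdetS] at h
    exact_mod_cast h.symm
  have heig : ∀ i, 0 < hS.eigenvalues i := by
    intro i
    rcases lt_or_eq_of_le (hPS.eigenvalues_nonneg i) with h | h
    · exact h
    · exfalso
      have : (∏ i, hS.eigenvalues i) = 0 :=
        Finset.prod_eq_zero (Finset.mem_univ i) h.symm
      rw [hprod] at this; norm_num at this
  have hspec : ∀ x ∈ spectrum ℝ S, 0 < x := by
    rw [hS.spectrum_real_eq_range_eigenvalues]
    rintro x ⟨i, rfl⟩
    exact heig i
  set L : Matrix (Fin n) (Fin n) ℝ := CFC.log S with hLdef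
  have hLsa : IsSelfAdjoint L := IsSelfAdjoint.log
  set ζ : Matrix (Fin n) (Fin n) ℝ := (1/2 : ℝ) • L with hζdef
  have hζsa : IsSelfAdjoint ζ := (IsSelfAdjoint.all _).smul hLsa
  have hζT : ζᵀ = ζ := (isSelfAdjoint_iff_transpose ζ).mp hζsa
  set B : Matrix (Fin n) (Fin n) ℝ := exp ζ with hBdef
  have hζζ : ζ + ζ = L := by
    rw [hζdef, ← add_smul]; norm_num
  have hBB : B * B = S := by
    rw [hBdef, ← Matrix.exp_add_of_commute ζ ζ (Commute.refl ζ), hζζ]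
    open scoped MatrixOrder in exact CFC.exp_log S (Matrix.isStrictlyPositive_iff_posDef.mpr (hS.posDef_iff_eigenvalues_pos.mpr heig))
  have hBT : Bᵀ = B := by
    rw [hBdef, ← Matrix.exp_transpose, hζT]
  -- trace of L and ζ
  have htrL : L.trace = 0 := by
    rw [hLdef, CFC.log, trace_cfc_aux hS]
    rw [← Real.log_prod (fun i _ => (heig i).ne'), hprod, Real.log_one]
  have htrζ : ζ.trace = 0 := by
    rw [hζdef, Matrix.trace_smul, htrL, smul_zero]
  have hdetB : B.det = 1 := by
    rw [hBdef, det_exp_eq hζsa, htrζ, Real.exp_zero]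
  have hBunit : IsUnit B.det := by rw [hdetB]; exact isUnit_one
  have hBinv : B⁻¹ * B = 1 := Matrix.nonsing_inv_mul B hBunit
  have hBinv' : B * B⁻¹ = 1 := Matrix.mul_nonsing_inv B hBunit
  have hBinvT : B⁻¹ᵀ = B⁻¹ := by rw [Matrix.transpose_nonsing_inv, hBT]
  set k : Matrix (Fin n) (Fin n) ℝ := A * B⁻¹ with hkdef
  have hkB : k * B = A := by
    rw [hkdef, Matrix.mul_assoc, hBinv, Matrix.mul_one]
  have hkT : kᵀ * k = 1 := by
    rw [hkdef, Matrix.transpose_mul, hBinvT]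
    calc B⁻¹ * Aᵀ * (A * B⁻¹) = B⁻¹ * (Aᵀ * A) * B⁻¹ := by
          simp only [Matrix.mul_assoc]
      _ = B⁻¹ * (B * B) * B⁻¹ := by rw [← hSdef, ← hBB]
      _ = (B⁻¹ * B) * (B * B⁻¹) := by simp only [Matrix.mul_assoc]
      _ = 1 := by rw [hBinv, hBinv', Matrix.mul_one]
  have hdetk : k.det = 1 := by
    rw [hkdef, Matrix.det_mul, hA, Matrix.det_nonsing_inv, hdetB, one_mul]
    simp
  refine ⟨⟨⟨k, hkT, hdetk⟩, ⟨ζ, hζT, htrζ⟩⟩, hkB.symm, ?_⟩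
  rintro ⟨⟨k', hk1', hk2'⟩, ⟨z, hz1, hz2⟩⟩ h
  simp only at h
  have hzsa : IsSelfAdjoint z := (isSelfAdjoint_iff_transpose z).mpr hz1
  have hET : (exp z)ᵀ = exp z := by rw [← Matrix.exp_transpose, hz1]
  have hEE : exp z * exp z = S := by
    rw [hSdef, h, Matrix.transpose_mul, hET]
    calc exp z * exp z = exp z * (k'ᵀ * k') * exp z := by
          rw [hk1', Matrix.mul_one]
      _ = exp z * k'ᵀ * (k' * exp z) := by simp only [Matrix.mul_assoc]
  have hzz : z + z = L := by
    have : exp (z + z) = S := by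
      rw [Matrix.exp_add_of_commute z z (Commute.refl z), hEE]
    rw [hLdef, ← this, CFC.log_exp (z + z) (hzsa.add hzsa)]
  have hzζ : z = ζ := by
    rw [hζdef, ← hzz]
    module
  have hkk : k' = k := by
    have hk'B : k' * B = A := by
      rw [hBdef, ← hzζ, ← h]
    calc k' = k' * B * B⁻¹ := by rw [Matrix.mul_assoc, hBinv', Matrix.mul_one]
      _ = A * B⁻¹ := by rw [hk'B]
      _ = k := rfl
  subst hzζ hkk
  rfl
end

section
/- An element A ∈ SL(2,ℝ) is strongly stable, i.e. its centralizer {g ∈ SL(2,ℝ) : g·A = A·g} is a compact subset of SL(2,ℝ), if and only if -2 < tr A < 2. Consequently the set D of strongly stable elements of SL(2,ℝ) equals Tr⁻¹((-2,2)) and is open and nonempty. -/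
/-- The set of strongly stable elements of `SL(2,ℝ)`: those whose centralizer is
compact. -/
def stronglyStableSL2R : Set (Matrix.SpecialLinearGroup (Fin 2) ℝ) :=
  {A | IsCompact {g : Matrix.SpecialLinearGroup (Fin 2) ℝ | g * A = A * g}}

namespace SL2RAux

open Matrix

abbrev M2 := Matrix (Fin 2) (Fin 2) ℝ
abbrev SL2 := Matrix.SpecialLinearGroup (Fin 2) ℝ

lemma emb : @Topology.IsEmbedding SL2 M2 _ _ ((↑) : SL2 → M2) := ⟨⟨rfl⟩, Subtype.coe_injective⟩

lemma cont_coe : Continuous ((↑) : SL2 → M2) := continuous_induced_dom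

lemma det_lin (A : M2) (hA : A.det = 1) (c d : ℝ) :
    (c • (1:M2) + d • A).det = c^2 + c*d*A.trace + d^2 := by
  rw [Matrix.det_fin_two] at hA ⊢
  rw [Matrix.trace_fin_two]
  simp [Matrix.add_apply, Matrix.smul_apply, Matrix.one_apply, smul_eq_mul]
  ring_nf
  nlinarith [hA]

lemma comm_lin (A : M2) (c d : ℝ) :
    (c • (1:M2) + d • A) * A = A * (c • (1:M2) + d • A) := by
  simp [add_mul, mul_add, Matrix.smul_mul, Matrix.mul_smul]

lemma commutant (A g : M2)
    (hns : A 0 1 ≠ 0 ∨ A 1 0 ≠ 0 ∨ A 0 0 ≠ A 1 1)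
    (hcomm : g * A = A * g) : ∃ c d : ℝ, g = c • (1:M2) + d • A := by
  have e00 := congrFun (congrFun hcomm 0) 0
  have e01 := congrFun (congrFun hcomm 0) 1
  have e10 := congrFun (congrFun hcomm 1) 0
  have e11 := congrFun (congrFun hcomm 1) 1
  simp [Matrix.mul_apply, Fin.sum_univ_succ] at e00 e01 e10 e11
  by_cases hb : A 0 1 ≠ 0
  · refine ⟨g 0 0 - (g 0 1 / A 0 1) * A 0 0, g 0 1 / A 0 1, ?_⟩
    ext i j
    fin_cases i <;> fin_cases j <;>
      simp [Matrix.add_apply, Matrix.smul_apply, Matrix.one_apply, smul_eq_mul] <;>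
      field_simp <;> ring_nf <;> nlinarith [e00, e01, e10, e11, sq_nonneg (A 0 1)]
  by_cases hc : A 1 0 ≠ 0
  · refine ⟨g 0 0 - (g 1 0 / A 1 0) * A 0 0, g 1 0 / A 1 0, ?_⟩
    ext i j
    fin_cases i <;> fin_cases j <;>
      simp [Matrix.add_apply, Matrix.smul_apply, Matrix.one_apply, smul_eq_mul] <;>
      field_simp <;> ring_nf <;> nlinarith [e00, e01, e10, e11, sq_nonneg (A 1 0)]
  push_neg at hb hc
  have hd : A 0 0 ≠ A 1 1 := by tauto
  have hq : g 0 1 = 0 := by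
    have h := e01
    rw [hb] at h
    have : g 0 1 * (A 1 1 - A 0 0) = 0 := by linarith [h]
    rcases mul_eq_zero.1 this with h' | h'
    · exact h'
    · exact absurd (by linarith) hd
  have hr : g 1 0 = 0 := by
    have h := e10
    rw [hc] at h
    have : g 1 0 * (A 0 0 - A 1 1) = 0 := by linarith [h]
    rcases mul_eq_zero.1 this with h' | h'
    · exact h'
    · exact absurd (by linarith) hd
  refine ⟨g 0 0 - ((g 0 0 - g 1 1)/(A 0 0 - A 1 1)) * A 0 0,
          (g 0 0 - g 1 1)/(A 0 0 - A 1 1), ?_⟩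
  have hsub : A 0 0 - A 1 1 ≠ 0 := sub_ne_zero.2 hd
  ext i j
  fin_cases i <;> fin_cases j <;>
    simp [Matrix.add_apply, Matrix.smul_apply, Matrix.one_apply, smul_eq_mul, hb, hc, hq, hr] <;>
    field_simp <;> ring

/-- Key iff. -/
lemma main_iff (A : SL2) :
    IsCompact {g : SL2 | g * A = A * g} ↔
      (-2 < Matrix.trace (A : M2) ∧ Matrix.trace (A : M2) < 2) := by
  set t : ℝ := Matrix.trace (A : M2) with ht
  constructor
  · -- compact → -2 < t < 2, by contraposition
    intro hC
    by_contra hcon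
    push_neg at hcon
    -- in all cases we get a bound on some entry and a family violating it
    by_cases hb : (A : M2) 0 1 ≠ 0 ∨ (A : M2) 1 0 ≠ 0
    · -- t² ≥ 4 case
      have ht4 : 4 ≤ t^2 := by
        by_cases h1 : -2 < t
        · have h2 := hcon h1
          nlinarith
        · push_neg at h1
          nlinarith
      -- family g_d = c d • 1 + d • A
      have hfam : ∀ d : ℝ, ∃ c : ℝ, c^2 + c*d*t + d^2 = 1 := by
        intro d
        have hnn : (0:ℝ) ≤ (t^2 - 4)*d^2 + 4 := by nlinarith [sq_nonneg d]
        refine ⟨(Real.sqrt ((t^2-4)*d^2+4) - t*d)/2, ?_⟩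
        have hs := Real.sq_sqrt hnn
        nlinarith [hs]
      have hmem : ∀ d c : ℝ, c^2 + c*d*t + d^2 = 1 →
          ∃ g ∈ {g : SL2 | g * A = A * g}, (g : M2) = c • (1:M2) + d • (A : M2) := by
        intro d c hcd
        have hdet : (c • (1:M2) + d • (A : M2)).det = 1 := by
          rw [det_lin (A : M2) A.2 c d, ← ht]; linarith [hcd]
        refine ⟨⟨_, hdet⟩, ?_, rfl⟩
        exact Subtype.ext (comm_lin (A : M2) c d)
      rcases hb with hb | hb
      · -- entry (0,1) unbounded
        have hcont : Continuous fun g : SL2 => |(g : M2) 0 1| :=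
          (cont_coe.matrix_elem 0 1).abs
        have hbd := (hC.image hcont).bddAbove
        obtain ⟨Mb, hMb⟩ := hbd
        have h1 : (1 : SL2) ∈ {g : SL2 | g * A = A * g} := by simp [Set.mem_setOf_eq]
        have hM0 : (0:ℝ) ≤ Mb := le_trans (abs_nonneg _) (hMb ⟨1, h1, rfl⟩)
        set d := (Mb + 1) / ((A : M2) 0 1) with hd
        obtain ⟨c, hcd⟩ := hfam d
        obtain ⟨g, hg, hge⟩ := hmem d c hcd
        have hval : (g : M2) 0 1 = Mb + 1 := by
          rw [hge]
          simp [Matrix.add_apply, Matrix.smul_apply, Matrix.one_apply, smul_eq_mul, hd,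
            div_mul_cancel₀ _ hb]
        have hle : |(g : M2) 0 1| ≤ Mb := hMb ⟨g, hg, rfl⟩
        rw [hval, abs_of_nonneg (by linarith)] at hle
        linarith
      · -- entry (1,0) unbounded
        have hcont : Continuous fun g : SL2 => |(g : M2) 1 0| :=
          (cont_coe.matrix_elem 1 0).abs
        have hbd := (hC.image hcont).bddAbove
        obtain ⟨Mb, hMb⟩ := hbd
        have h1 : (1 : SL2) ∈ {g : SL2 | g * A = A * g} := by simp [Set.mem_setOf_eq]
        have hM0 : (0:ℝ) ≤ Mb := le_trans (abs_nonneg _) (hMb ⟨1, h1, rfl⟩)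
        set d := (Mb + 1) / ((A : M2) 1 0) with hd
        obtain ⟨c, hcd⟩ := hfam d
        obtain ⟨g, hg, hge⟩ := hmem d c hcd
        have hval : (g : M2) 1 0 = Mb + 1 := by
          rw [hge]
          simp [Matrix.add_apply, Matrix.smul_apply, Matrix.one_apply, smul_eq_mul, hd,
            div_mul_cancel₀ _ hb]
        have hle : |(g : M2) 1 0| ≤ Mb := hMb ⟨g, hg, rfl⟩
        rw [hval, abs_of_nonneg (by linarith)] at hle
        linarith
    · -- diagonal case: centralizer contains all diag(x, x⁻¹)
      push_neg at hb
      obtain ⟨hb1, hb2⟩ := hb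
      have hcont : Continuous fun g : SL2 => |(g : M2) 0 0| :=
        (cont_coe.matrix_elem 0 0).abs
      have hbd := (hC.image hcont).bddAbove
      obtain ⟨Mb, hMb⟩ := hbd
      have h1 : (1 : SL2) ∈ {g : SL2 | g * A = A * g} := by simp [Set.mem_setOf_eq]
      have hM0 : (0:ℝ) ≤ Mb := le_trans (abs_nonneg _) (hMb ⟨1, h1, rfl⟩)
      set x : ℝ := Mb + 1 with hx
      have hxne : x ≠ 0 := by positivity
      have hdet : (Matrix.of ![![x, 0], ![0, x⁻¹]] : M2).det = 1 := by
        simp [Matrix.det_fin_two, mul_inv_cancel₀ hxne]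
      set g : SL2 := ⟨_, hdet⟩ with hg
      have hgmem : g ∈ {g : SL2 | g * A = A * g} := by
        show g * A = A * g
        apply Subtype.ext
        show ((g : M2) * (A : M2)) = ((A : M2) * (g : M2))
        ext i j
        fin_cases i <;> fin_cases j <;>
          simp [hg, Matrix.mul_apply, Fin.sum_univ_succ, hb1, hb2] <;> ring
      have hle : |(g : M2) 0 0| ≤ Mb := hMb ⟨g, hgmem, rfl⟩
      have hval : (g : M2) 0 0 = x := by simp [hg]
      rw [hval, abs_of_nonneg (by linarith)] at hle
      linarith
  · -- -2 < t < 2 → compact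
    rintro ⟨ht1, ht2⟩
    -- A is non-scalar
    have hns : (A : M2) 0 1 ≠ 0 ∨ (A : M2) 1 0 ≠ 0 ∨ (A : M2) 0 0 ≠ (A : M2) 1 1 := by
      by_contra h
      push_neg at h
      obtain ⟨h1, h2, h3⟩ := h
      have hdet := A.2
      rw [Matrix.det_fin_two] at hdet
      have htr : t = (A : M2) 0 0 + (A : M2) 1 1 := by
        rw [ht, Matrix.trace_fin_two]
      nlinarith
    -- ellipse
    set E : Set (ℝ × ℝ) := {p | p.1^2 + p.1*p.2*t + p.2^2 = 1} with hE
    set φ : ℝ × ℝ → M2 := fun p => p.1 • (1:M2) + p.2 • (A : M2) with hφ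
    have hφc : Continuous φ := by
      apply (continuous_fst.smul continuous_const).add
        (continuous_snd.smul continuous_const)
    have hEc : IsCompact E := by
      have hclosed : IsClosed E := by
        have : E = (fun p : ℝ × ℝ => p.1^2 + p.1*p.2*t + p.2^2) ⁻¹' {1} := rfl
        rw [this]
        exact isClosed_singleton.preimage (by fun_prop)
      have habs : |t| < 2 := abs_lt.2 ⟨ht1, ht2⟩
      have hpos : 0 < 2 - |t| := by linarith
      apply (isCompact_closedBall (0 : ℝ × ℝ)
        (Real.sqrt (2/(2-|t|)))).of_isClosed_subset hclosed
      intro p hp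
      have hp' : p.1^2 + p.1*p.2*t + p.2^2 = 1 := hp
      have key : (p.1^2 + p.2^2) * (2 - |t|) ≤ 2 := by
        have h1 : |t * (p.1 * p.2)| ≤ |t| * ((p.1^2 + p.2^2)/2) := by
          rw [abs_mul]
          have : |p.1 * p.2| ≤ (p.1^2 + p.2^2)/2 := by
            rw [abs_mul]
            nlinarith [sq_nonneg (|p.1| - |p.2|), sq_abs p.1, sq_abs p.2]
          exact mul_le_mul_of_nonneg_left this (abs_nonneg t)
        have h2 : -(|t| * ((p.1^2 + p.2^2)/2)) ≤ t * (p.1 * p.2) := neg_le_of_abs_le h1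
        nlinarith [abs_nonneg t]
      have hsq : p.1^2 + p.2^2 ≤ 2/(2-|t|) := by
        rw [le_div_iff₀ hpos]
        linarith
      rw [mem_closedBall_zero_iff, Prod.norm_def]
      have hb1 : ‖p.1‖ ≤ Real.sqrt (2/(2-|t|)) := by
        rw [Real.norm_eq_abs, ← Real.sqrt_sq_eq_abs]
        exact Real.sqrt_le_sqrt (by nlinarith [sq_nonneg p.2])
      have hb2 : ‖p.2‖ ≤ Real.sqrt (2/(2-|t|)) := by
        rw [Real.norm_eq_abs, ← Real.sqrt_sq_eq_abs]
        exact Real.sqrt_le_sqrt (by nlinarith [sq_nonneg p.1])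
      exact max_le hb1 hb2
    -- image equality
    have himg : ((↑) : SL2 → M2) '' {g : SL2 | g * A = A * g} = φ '' E := by
      apply Set.Subset.antisymm
      · rintro _ ⟨g, hg, rfl⟩
        have hgc : (g : M2) * (A : M2) = (A : M2) * (g : M2) := by
          have := congrArg (Subtype.val) hg
          exact this
        obtain ⟨c, d, hcd⟩ := commutant (A : M2) (g : M2) hns hgc
        have hdet : (c • (1:M2) + d • (A : M2)).det = 1 := by rw [← hcd]; exact g.2
        rw [det_lin (A : M2) A.2 c d, ← ht] at hdet
        exact ⟨(c, d), hdet, hcd.symm⟩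
      · rintro _ ⟨⟨c, d⟩, hp, rfl⟩
        have hp' : c^2 + c*d*t + d^2 = 1 := hp
        have hdet : (c • (1:M2) + d • (A : M2)).det = 1 := by
          rw [det_lin (A : M2) A.2 c d, ← ht]; linarith
        refine ⟨⟨_, hdet⟩, ?_, rfl⟩
        exact Subtype.ext (comm_lin (A : M2) c d)
    rw [emb.isCompact_iff]
    have hK := hEc.image hφc
    rw [← himg] at hK
    exact hK

end SL2RAux

/-- An element `A ∈ SL(2,ℝ)` is strongly stable (its centralizer is
compact) if and only if `-2 < tr A < 2`; consequently the set `D` of strongly stable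
elements equals `Tr⁻¹((-2,2))` and is open and nonempty. -/
theorem strongly_stable_SL2R :
    (∀ A : Matrix.SpecialLinearGroup (Fin 2) ℝ,
      IsCompact {g : Matrix.SpecialLinearGroup (Fin 2) ℝ | g * A = A * g} ↔
        (-2 < Matrix.trace (A : Matrix (Fin 2) (Fin 2) ℝ) ∧
          Matrix.trace (A : Matrix (Fin 2) (Fin 2) ℝ) < 2)) ∧
    stronglyStableSL2R =
      {A : Matrix.SpecialLinearGroup (Fin 2) ℝ |
        Matrix.trace (A : Matrix (Fin 2) (Fin 2) ℝ) ∈ Set.Ioo (-2 : ℝ) 2} ∧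
    IsOpen stronglyStableSL2R ∧
    stronglyStableSL2R.Nonempty := by
  have hiff := SL2RAux.main_iff
  have hset : stronglyStableSL2R =
      {A : Matrix.SpecialLinearGroup (Fin 2) ℝ |
        Matrix.trace (A : Matrix (Fin 2) (Fin 2) ℝ) ∈ Set.Ioo (-2 : ℝ) 2} := by
    ext A
    simpa [stronglyStableSL2R, Set.mem_setOf_eq, Set.mem_Ioo] using hiff A
  refine ⟨hiff, hset, ?_, ?_⟩
  · rw [hset]
    have hcont : Continuous fun A : Matrix.SpecialLinearGroup (Fin 2) ℝ =>
        Matrix.trace (A : Matrix (Fin 2) (Fin 2) ℝ) :=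
      SL2RAux.cont_coe.matrix_trace
    exact isOpen_Ioo.preimage hcont
  · rw [hset]
    have hdet : (Matrix.of ![![(0:ℝ), -1], ![1, 0]]).det = 1 := by
      simp [Matrix.det_fin_two]
    refine ⟨⟨_, hdet⟩, ?_⟩
    show Matrix.trace (Matrix.of ![![(0:ℝ), -1], ![1, 0]]) ∈ Set.Ioo (-2:ℝ) 2
    simp [Set.mem_setOf_eq, Matrix.trace_fin_two]
end
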